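/- The solutions (𝒱,π), (𝒲,σ) to the equation (1_n, γ_n) = (𝒱,π)·(𝒲,σ) in partitioned permutations are exactly those of the form (𝒱,π) = (0_π, π) with π ∈ NC(n) and (𝒲,σ) = (0_{π⁻¹γ_n}, π⁻¹γ_n). In particular, in every such factorization 𝒱 and 𝒲 are the orbit partitions of π and σ respectively, πσ = γ_n, and |π| + |π⁻¹γ_n| = n − 1. -/

import Mathlib

open Equiv

def orbitSetoid {α : Type*} (π : Equiv.Perm α) : Setoid α where
  r := π.SameCycle
  iseqv := ⟨fun x => Equiv.Perm.SameCycle.refl π x, fun h => h.symm, fun h h' => h.trans h'⟩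

noncomputable def cycleCount {n : ℕ} (π : Equiv.Perm (Fin n)) : ℕ :=
  Nat.card (Quotient (orbitSetoid π))

noncomputable def pLen {n : ℕ} (V : Setoid (Fin n)) : ℤ :=
  (n : ℤ) - Nat.card (Quotient V)

noncomputable def permLen {n : ℕ} (π : Equiv.Perm (Fin n)) : ℤ :=
  (n : ℤ) - cycleCount π

theorem orbitSetoid_mul_le {α : Type*} (π σ : Equiv.Perm α) :
    orbitSetoid (π * σ) ≤ orbitSetoid π ⊔ orbitSetoid σ := by
  set S := orbitSetoid π ⊔ orbitSetoid σ with hS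
  have hstep : ∀ x, S x ((π * σ) x) := by
    intro x
    have h1 : S x (σ x) := Setoid.le_def.mp le_sup_right ⟨1, by simp⟩
    have h2 : S (σ x) (π (σ x)) := Setoid.le_def.mp le_sup_left ⟨1, by simp⟩
    exact S.iseqv.trans h1 h2
  have hpow : ∀ (k : ℤ) (x : α), S x (((π * σ) ^ k) x) := by
    intro k
    induction k using Int.induction_on with
    | zero => intro x; simpa using S.iseqv.refl x
    | succ k ih =>
        intro x
        have h : ((π * σ) ^ ((k : ℤ) + 1)) x = ((π * σ) ^ (k : ℤ)) ((π * σ) x) := by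
          rw [zpow_add_one]
          simp [Equiv.Perm.mul_apply]
        rw [h]
        exact S.iseqv.trans (hstep x) (ih ((π * σ) x))
    | pred k ih =>
        intro x
        have h : ((π * σ) ^ (-(k : ℤ) - 1)) x = ((π * σ) ^ (-(k : ℤ))) ((π * σ)⁻¹ x) := by
          rw [zpow_sub_one]
          simp [Equiv.Perm.mul_apply]
        rw [h]
        have hinv : S x ((π * σ)⁻¹ x) := by
          have h2 := hstep ((π * σ)⁻¹ x)
          rw [← Equiv.Perm.mul_apply, mul_inv_cancel, Equiv.Perm.one_apply] at h2
          exact S.iseqv.symm h2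
        exact S.iseqv.trans hinv (ih ((π * σ)⁻¹ x))
  rw [Setoid.le_def]
  rintro x y ⟨k, hk⟩
  exact hk ▸ hpow k x

/-- A partitioned permutation: a pair `(𝒱, π)` with `𝒱` a partition of `{1,…,n}`
(encoded as a setoid on `Fin n`) coarser than the orbit partition of `π`. -/
structure PartitionedPerm (n : ℕ) where
  part : Setoid (Fin n)
  perm : Equiv.Perm (Fin n)
  hle : orbitSetoid perm ≤ part

/-- The length `|(𝒱,π)| := 2|𝒱| − |π|` of a partitioned permutation. -/
noncomputable def ppLen {n : ℕ} (a : PartitionedPerm n) : ℤ :=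
  2 * pLen a.part - permLen a.perm

/-- The product of partitioned permutations: `(𝒱,π)·(𝒲,σ) = (𝒱∨𝒲, πσ)` if the
lengths add up, and `0` (here: `none`) otherwise. -/
noncomputable def ppMul {n : ℕ} (a b : PartitionedPerm n) : Option (PartitionedPerm n) :=
  if ppLen a + ppLen b = 2 * pLen (a.part ⊔ b.part) - permLen (a.perm * b.perm)
  then some ⟨a.part ⊔ b.part, a.perm * b.perm,
        le_trans (orbitSetoid_mul_le a.perm b.perm) (sup_le_sup a.hle b.hle)⟩
  else none

/-- The full cycle `γ_n = (1,2,…,n)`. -/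
def gammaCycle (n : ℕ) : Equiv.Perm (Fin n) := finRotate n

/-- The permutation `γ_{m,n} = (1,…,m)(m+1,…,m+n)` consisting of two full cycles. -/
def gammaTwo (m n : ℕ) : Equiv.Perm (Fin (m + n)) :=
  (Equiv.permCongr finSumFinEquiv) (Equiv.sumCongr (finRotate m) (finRotate n))

/-- The partitioned permutation `(1_n, γ_n)`. -/
noncomputable def topGamma (n : ℕ) : PartitionedPerm n :=
  ⟨⊤, gammaCycle n, le_top⟩

/-- The partitioned permutation `(1_{m+n}, γ_{m,n})`. -/
noncomputable def topGammaTwo (m n : ℕ) : PartitionedPerm (m + n) :=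
  ⟨⊤, gammaTwo m n, le_top⟩

/-- `π` is a non-crossing permutation of `{1,…,n}`: `|π| + |π⁻¹γ_n| = n − 1`. -/
def IsNC {n : ℕ} (π : Equiv.Perm (Fin n)) : Prop :=
  permLen π + permLen (π⁻¹ * gammaCycle n) = (n : ℤ) - 1


section Aux

open Function

variable {α : Type*}

/-- The canonical map between quotients of comparable setoids. -/
def quotMap {S T : Setoid α} (h : S ≤ T) : Quotient S → Quotient T :=
  Quotient.lift (fun x => Quotient.mk T x) fun _ _ hxy => Quotient.sound (h hxy)

lemma quotMap_mk {S T : Setoid α} (h : S ≤ T) (x : α) :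
    quotMap h (Quotient.mk S x) = Quotient.mk T x := rfl

lemma quotMap_surjective {S T : Setoid α} (h : S ≤ T) : Surjective (quotMap h) := by
  rintro ⟨x⟩
  exact ⟨Quotient.mk S x, rfl⟩

lemma card_quotient_le_of_le [Finite α] {S T : Setoid α} (h : S ≤ T) :
    Nat.card (Quotient T) ≤ Nat.card (Quotient S) :=
  Nat.card_le_card_of_surjective (quotMap h) (quotMap_surjective h)

lemma setoid_eq_of_card_quotient_eq [Finite α] {S T : Setoid α} (h : S ≤ T)
    (hc : Nat.card (Quotient T) = Nat.card (Quotient S)) : S = T := by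
  have hbij : Bijective (quotMap h) :=
    (Nat.bijective_iff_surjective_and_card (quotMap h)).mpr ⟨quotMap_surjective h, hc.symm⟩
  ext x y
  constructor
  · exact fun hxy => h hxy
  · intro hxy
    have hxy' : quotMap h (Quotient.mk S x) = quotMap h (Quotient.mk S y) := by
      rw [quotMap_mk, quotMap_mk]
      exact Quotient.sound hxy
    exact Quotient.exact (hbij.1 hxy')

/-- The setoid obtained from `S` by merging the classes of `a` and `b`. -/
def mergeSetoid (S : Setoid α) (a b : α) : Setoid α where
  r x y := S x y ∨ (S x a ∧ S b y) ∨ (S x b ∧ S a y)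
  iseqv := by
    constructor
    · intro x
      exact Or.inl (S.iseqv.refl x)
    · rintro x y (h | ⟨h1, h2⟩ | ⟨h1, h2⟩)
      · exact Or.inl (S.iseqv.symm h)
      · exact Or.inr (Or.inr ⟨S.iseqv.symm h2, S.iseqv.symm h1⟩)
      · exact Or.inr (Or.inl ⟨S.iseqv.symm h2, S.iseqv.symm h1⟩)
    · rintro x y z (h | ⟨h1, h2⟩ | ⟨h1, h2⟩) (h' | ⟨h1', h2'⟩ | ⟨h1', h2'⟩)
      · exact Or.inl (S.iseqv.trans h h')
      · exact Or.inr (Or.inl ⟨S.iseqv.trans h h1', h2'⟩)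
      · exact Or.inr (Or.inr ⟨S.iseqv.trans h h1', h2'⟩)
      · exact Or.inr (Or.inl ⟨h1, S.iseqv.trans h2 h'⟩)
      · exact Or.inl (S.iseqv.trans h1 (S.iseqv.trans
          (S.iseqv.symm (S.iseqv.trans h2 h1')) h2'))
      · exact Or.inl (S.iseqv.trans h1 h2')
      · exact Or.inr (Or.inr ⟨h1, S.iseqv.trans h2 h'⟩)
      · exact Or.inl (S.iseqv.trans h1 h2')
      · exact Or.inl (S.iseqv.trans h1 (S.iseqv.trans
          (S.iseqv.symm (S.iseqv.trans h2 h1')) h2'))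

lemma le_mergeSetoid (S : Setoid α) (a b : α) : S ≤ mergeSetoid S a b :=
  Setoid.le_def.mpr fun h => Or.inl h

lemma swap_zpow_cases [DecidableEq α] (a b : α) (k : ℤ) :
    (Equiv.swap a b) ^ k = 1 ∨ (Equiv.swap a b) ^ k = Equiv.swap a b := by
  have h2 : (Equiv.swap a b) ^ (2 : ℤ) = 1 := by
    rw [show (2 : ℤ) = 1 + 1 by ring, zpow_add, zpow_one, Equiv.swap_mul_self]
  obtain ⟨q, r, hr, rfl⟩ : ∃ q r : ℤ, (r = 0 ∨ r = 1) ∧ k = 2 * q + r :=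
    ⟨k / 2, k % 2, by omega, by omega⟩
  rcases hr with rfl | rfl <;>
    rw [zpow_add, zpow_mul, h2, one_zpow, one_mul] <;> simp

lemma orbit_swap_le_merge [DecidableEq α] (S : Setoid α) (a b : α) :
    orbitSetoid (Equiv.swap a b) ≤ mergeSetoid S a b := by
  rw [Setoid.le_def]
  rintro x y ⟨k, hk⟩
  rcases swap_zpow_cases a b k with h1 | h1 <;> rw [h1] at hk
  · simp only [Equiv.Perm.coe_one, id_eq] at hk
    subst hk
    exact Or.inl (S.iseqv.refl x)
  · by_cases hxa : x = a
    · subst hxa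
      rw [Equiv.swap_apply_left] at hk
      subst hk
      exact Or.inr (Or.inl ⟨S.iseqv.refl x, S.iseqv.refl _⟩)
    · by_cases hxb : x = b
      · subst hxb
        rw [Equiv.swap_apply_right] at hk
        subst hk
        exact Or.inr (Or.inr ⟨S.iseqv.refl x, S.iseqv.refl _⟩)
      · rw [Equiv.swap_apply_of_ne_of_ne hxa hxb] at hk
        subst hk
        exact Or.inl (S.iseqv.refl x)

lemma card_le_merge [Finite α] (S : Setoid α) (a b : α) :
    Nat.card (Quotient S) ≤ Nat.card (Quotient (mergeSetoid S a b)) + 1 := by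
  classical
  set M := mergeSetoid S a b with hM
  let f : Quotient S → Option (Quotient M) := fun u =>
    if u = Quotient.mk S b then none else some (quotMap (le_mergeSetoid S a b) u)
  have hinj : Injective f := by
    intro u v huv
    induction u using Quotient.inductionOn with | _ x =>
    induction v using Quotient.inductionOn with | _ y =>
    by_cases hx : Quotient.mk S x = Quotient.mk S b <;>
      by_cases hy : Quotient.mk S y = Quotient.mk S b
    · rw [hx, hy]
    · simp only [f, if_pos hx, if_neg hy] at huv
      exact absurd huv (by simp)
    · simp only [f, if_neg hx, if_pos hy] at huv
      exact absurd huv (by simp)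
    · simp only [f, if_neg hx, if_neg hy, Option.some_inj, quotMap_mk] at huv
      have hrel : M x y := Quotient.exact huv
      rcases hrel with h | ⟨h1, h2⟩ | ⟨h1, h2⟩
      · exact Quotient.sound h
      · exact absurd (Quotient.sound (S.iseqv.symm h2) : Quotient.mk S y = Quotient.mk S b) hy
      · exact absurd (Quotient.sound h1 : Quotient.mk S x = Quotient.mk S b) hx
  haveI : Fintype (Quotient M) := Fintype.ofFinite _
  calc Nat.card (Quotient S) ≤ Nat.card (Option (Quotient M)) :=
        Nat.card_le_card_of_injective f hinj
    _ = Nat.card (Quotient M) + 1 := Finite.card_option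

end Aux

lemma cycleCount_le_swap_mul {n : ℕ} (a b : Fin n) (μ : Equiv.Perm (Fin n)) :
    cycleCount μ ≤ cycleCount (Equiv.swap a b * μ) + 1 := by
  have h1 : orbitSetoid (Equiv.swap a b * μ) ≤ mergeSetoid (orbitSetoid μ) a b :=
    le_trans (orbitSetoid_mul_le _ _)
      (sup_le (orbit_swap_le_merge _ a b) (le_mergeSetoid _ a b))
  calc cycleCount μ ≤ Nat.card (Quotient (mergeSetoid (orbitSetoid μ) a b)) + 1 :=
        card_le_merge _ a b
    _ ≤ cycleCount (Equiv.swap a b * μ) + 1 :=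
        Nat.add_le_add_right (card_quotient_le_of_le h1) 1

lemma cycleCount_lt_of_fix {n : ℕ} (π : Equiv.Perm (Fin n)) (x : Fin n) (hx : π x ≠ x) :
    cycleCount π < cycleCount (Equiv.swap x (π x) * π) := by
  set ρ := Equiv.swap x (π x) * π with hρ
  have hρx : ρ x = x := by
    simp [hρ, Equiv.swap_apply_right]
  have hswle : orbitSetoid (Equiv.swap x (π x)) ≤ orbitSetoid π := by
    rw [Setoid.le_def]
    rintro u v ⟨k, hk⟩
    rcases swap_zpow_cases x (π x) k with h | h <;> rw [h] at hk
    · simp only [Equiv.Perm.coe_one, id_eq] at hk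
      subst hk
      exact Equiv.Perm.SameCycle.refl π u
    · by_cases hu : u = x
      · subst hu
        rw [Equiv.swap_apply_left] at hk
        subst hk
        exact ⟨1, by simp⟩
      · by_cases hu2 : u = π x
        · subst hu2
          rw [Equiv.swap_apply_right] at hk
          subst hk
          exact Equiv.Perm.SameCycle.symm ⟨1, by simp⟩
        · rw [Equiv.swap_apply_of_ne_of_ne hu hu2] at hk
          subst hk
          exact Equiv.Perm.SameCycle.refl π u
  have hle : orbitSetoid ρ ≤ orbitSetoid π :=
    le_trans (orbitSetoid_mul_le _ _) (sup_le hswle le_rfl)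
  have hne : orbitSetoid ρ ≠ orbitSetoid π := by
    intro he
    have hrel : orbitSetoid ρ x (π x) := by
      rw [he]
      exact ⟨1, by simp⟩
    obtain ⟨k, hk⟩ := hrel
    have hfix : (ρ ^ k) x = x := Function.IsFixedPt.perm_zpow hρx k
    exact hx (by rw [← hk, hfix])
  have hlecard : Nat.card (Quotient (orbitSetoid π)) ≤ Nat.card (Quotient (orbitSetoid ρ)) :=
    card_quotient_le_of_le hle
  rcases lt_or_eq_of_le hlecard with h | h
  · exact h
  · exact absurd (setoid_eq_of_card_quotient_eq hle h) hne

lemma cycleCount_one {n : ℕ} : cycleCount (1 : Equiv.Perm (Fin n)) = n := by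
  have e : Quotient (orbitSetoid (1 : Equiv.Perm (Fin n))) ≃ Fin n := by
    refine Equiv.ofBijective (Quotient.lift id fun x y h => ?_) ⟨?_, ?_⟩
    · exact Equiv.Perm.sameCycle_one.mp h
    · intro u v
      induction u using Quotient.inductionOn with | _ x =>
      induction v using Quotient.inductionOn with | _ y =>
      intro h
      exact Quotient.sound (Equiv.Perm.sameCycle_one.mpr h)
    · exact fun x => ⟨Quotient.mk _ x, rfl⟩
  rw [cycleCount, Nat.card_congr e, Nat.card_eq_fintype_card, Fintype.card_fin]

lemma permLen_one {n : ℕ} : permLen (1 : Equiv.Perm (Fin n)) = 0 := by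
  simp [permLen, cycleCount_one]

lemma permLen_mul_le {n : ℕ} (π σ : Equiv.Perm (Fin n)) :
    permLen (π * σ) ≤ permLen π + permLen σ := by
  generalize hk : π.support.card = k
  induction k using Nat.strong_induction_on generalizing π σ with
  | _ k ih =>
    by_cases hπ : π = 1
    · subst hπ
      simp [permLen_one]
    · obtain ⟨x, hx⟩ : ∃ x, π x ≠ x := by
        by_contra hc
        push_neg at hc
        exact hπ (Equiv.ext hc)
      set τ := Equiv.swap x (π x) with hτ
      set ρ := τ * π with hρ
      have hππ : π = τ * ρ := by
        rw [hρ, ← mul_assoc, hτ, Equiv.swap_mul_self, one_mul]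
      have hρx : ρ x = x := by simp [hρ, hτ, Equiv.swap_apply_right]
      have hsupp : ρ.support.card < k := by
        rw [← hk]
        apply Finset.card_lt_card
        constructor
        · intro z hz
          rw [Equiv.Perm.mem_support] at hz ⊢
          intro hzz
          apply hz
          have hz1 : z ≠ x := fun h => hx (h ▸ hzz)
          have hz2 : z ≠ π x := fun h => hz1 (π.injective (by rw [← h, hzz]))
          rw [hρ, Equiv.Perm.mul_apply, hzz, hτ, Equiv.swap_apply_of_ne_of_ne hz1 hz2]
        · intro hsub
          have hxs : x ∈ π.support := Equiv.Perm.mem_support.mpr hx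
          have := hsub hxs
          rw [Equiv.Perm.mem_support] at this
          exact this hρx
      have h1 : cycleCount π < cycleCount ρ := cycleCount_lt_of_fix π x hx
      have h2 : cycleCount (ρ * σ) ≤ cycleCount (τ * (ρ * σ)) + 1 :=
        cycleCount_le_swap_mul x (π x) (ρ * σ)
      have h3 : permLen (ρ * σ) ≤ permLen ρ + permLen σ := ih _ hsupp ρ σ rfl
      have h4 : π * σ = τ * (ρ * σ) := by rw [hππ, mul_assoc]
      have h1' : (cycleCount π : ℤ) + 1 ≤ (cycleCount ρ : ℤ) := by exact_mod_cast h1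
      have h2' : (cycleCount (ρ * σ) : ℤ) ≤ (cycleCount (τ * (ρ * σ)) : ℤ) + 1 := by
        exact_mod_cast h2
      rw [h4]
      simp only [permLen] at h3 ⊢
      linarith

open Fin.NatCast Fin.CommRing in
lemma orbitSetoid_gamma {n : ℕ} (hn : 1 ≤ n) : orbitSetoid (gammaCycle n) = ⊤ := by
  match n, hn with
  | (m + 1), _ =>
    refine le_antisymm le_top (Setoid.le_def.mpr ?_)
    intro x y _
    have hpow : ∀ (k : ℕ) (x : Fin (m + 1)),
        ((finRotate (m + 1)) ^ k) x = x + (k : Fin (m + 1)) := by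
      intro k
      induction k with
      | zero => simp
      | succ k ihk =>
        intro x
        rw [pow_succ', Equiv.Perm.mul_apply, finRotate_succ_apply, ihk]
        push_cast
        ring
    refine ⟨((y - x).val : ℤ), ?_⟩
    rw [zpow_natCast, gammaCycle, hpow]
    rw [Fin.cast_val_eq_self]
    ring

lemma card_quotient_top {n : ℕ} (hn : 1 ≤ n) :
    Nat.card (Quotient (⊤ : Setoid (Fin n))) = 1 := by
  rw [Nat.card_eq_one_iff_unique]
  constructor
  · constructor
    intro u v
    induction u using Quotient.inductionOn with | _ x =>
    induction v using Quotient.inductionOn with | _ y =>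
    exact Quotient.sound trivial
  · exact ⟨Quotient.mk _ ⟨0, hn⟩⟩

lemma permLen_gamma {n : ℕ} (hn : 1 ≤ n) : permLen (gammaCycle n) = (n : ℤ) - 1 := by
  rw [permLen, cycleCount, orbitSetoid_gamma hn, card_quotient_top hn]
  norm_num

lemma pLen_top {n : ℕ} (hn : 1 ≤ n) : pLen (⊤ : Setoid (Fin n)) = (n : ℤ) - 1 := by
  rw [pLen, card_quotient_top hn]
  norm_num

lemma permLen_le_pLen {n : ℕ} (a : PartitionedPerm n) : permLen a.perm ≤ pLen a.part := by
  rw [permLen, pLen, cycleCount]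
  have := card_quotient_le_of_le a.hle
  omega

lemma part_eq_orbit {n : ℕ} (a : PartitionedPerm n)
    (h : pLen a.part = permLen a.perm) : a.part = orbitSetoid a.perm := by
  have hcard : Nat.card (Quotient a.part) = Nat.card (Quotient (orbitSetoid a.perm)) := by
    rw [pLen, permLen, cycleCount] at h
    omega
  exact (setoid_eq_of_card_quotient_eq a.hle hcard).symm

lemma pLen_orbit {n : ℕ} (π : Equiv.Perm (Fin n)) : pLen (orbitSetoid π) = permLen π := rfl

lemma PartitionedPerm.ext' {n : ℕ} {a b : PartitionedPerm n}
    (h1 : a.part = b.part) (h2 : a.perm = b.perm) : a = b := by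
  cases a
  cases b
  subst h1
  subst h2
  rfl

/-- The solutions `(𝒱,π)·(𝒲,σ) = (1_n, γ_n)` in partitioned permutations are exactly of
the form `(0_π, π)·(0_{π⁻¹γ_n}, π⁻¹γ_n)` with `π ∈ NC(n)`: in every such factorization
`𝒱` and `𝒲` are the orbit partitions of `π` and `σ`, `πσ = γ_n`, and
`|π| + |π⁻¹γ_n| = n − 1`. -/
theorem factorization_of_topGamma {n : ℕ} (hn : 1 ≤ n) (a b : PartitionedPerm n) :
    ppMul a b = some (topGamma n) ↔
      (a.part = orbitSetoid a.perm ∧ b.part = orbitSetoid b.perm ∧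
        a.perm * b.perm = gammaCycle n ∧ b.perm = a.perm⁻¹ * gammaCycle n ∧
        IsNC a.perm) := by
  have hγ : permLen (gammaCycle n) = (n : ℤ) - 1 := permLen_gamma hn
  have hT : pLen (⊤ : Setoid (Fin n)) = (n : ℤ) - 1 := pLen_top hn
  constructor
  · intro h
    rw [ppMul] at h
    split_ifs at h with hc
    · rw [Option.some_inj] at h
      have hpart : a.part ⊔ b.part = ⊤ := congrArg PartitionedPerm.part h
      have hperm : a.perm * b.perm = gammaCycle n := congrArg PartitionedPerm.perm h
      have h1 : permLen a.perm ≤ pLen a.part := permLen_le_pLen a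
      have h2 : permLen b.perm ≤ pLen b.part := permLen_le_pLen b
      have h3 : (n : ℤ) - 1 ≤ permLen a.perm + permLen b.perm := by
        rw [← hγ, ← hperm]
        exact permLen_mul_le a.perm b.perm
      rw [hpart, hperm, hT, hγ] at hc
      simp only [ppLen] at hc
      have hA : pLen a.part = permLen a.perm := by linarith
      have hB : pLen b.part = permLen b.perm := by linarith
      have hsum : permLen a.perm + permLen b.perm = (n : ℤ) - 1 := by linarith
      have hbp : b.perm = a.perm⁻¹ * gammaCycle n := by
        rw [← hperm, ← mul_assoc, inv_mul_cancel, one_mul]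
      refine ⟨part_eq_orbit a hA, part_eq_orbit b hB, hperm, hbp, ?_⟩
      rw [IsNC, ← hbp]
      exact hsum
  · rintro ⟨hA, hB, hm, hbp, hnc⟩
    have hsum : permLen a.perm + permLen b.perm = (n : ℤ) - 1 := by
      rw [hbp]
      exact hnc
    have hsup : a.part ⊔ b.part = ⊤ := by
      refine le_antisymm le_top ?_
      calc (⊤ : Setoid (Fin n)) = orbitSetoid (gammaCycle n) := (orbitSetoid_gamma hn).symm
        _ = orbitSetoid (a.perm * b.perm) := by rw [hm]
        _ ≤ orbitSetoid a.perm ⊔ orbitSetoid b.perm := orbitSetoid_mul_le _ _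
        _ = a.part ⊔ b.part := by rw [hA, hB]
    have hcond : ppLen a + ppLen b =
        2 * pLen (a.part ⊔ b.part) - permLen (a.perm * b.perm) := by
      simp only [ppLen]
      rw [hsup, hm, hT, hγ, hA, hB, pLen_orbit, pLen_orbit]
      linarith
    rw [ppMul, if_pos hcond]
    exact congrArg some (PartitionedPerm.ext' hsup hm)
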